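/- Let H be a complex Hilbert space, J a countable index set, and let {e_j : j ∈ J} and {e_j^⊥ : j ∈ J} be orthonormal systems in H such that ⟨e_j, e_k^⊥⟩ = 0 for all j, k ∈ J. Let α_j, β_j be complex numbers with α_j·β_j ≠ 0 and |α_j|² + |β_j|² = 1, and set f_j := α_j e_j + β_j e_j^⊥. Let E and F be the orthogonal projections onto the closed linear spans of {e_j} and {f_j} respectively. Then: (i) {f_j : j ∈ J} is an orthonormal system; (ii) E∧F = 0; (iii) each e_j is an eigenvector of EFE with eigenvalue |α_j|²; and (iv) ‖E − F‖ = sup_{j ∈ J} √(1 − |α_j|²). -/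

import Mathlib

local notation "⟪" x ", " y "⟫" => @inner ℂ _ _ x y

section Helpers

variable {H : Type*} [NormedAddCommGroup H] [InnerProductSpace ℂ H] [CompleteSpace H]
  {J : Type*}

omit [CompleteSpace H] in
lemma orth_closure {S : Set H} {x y : H}
    (hx : x ∈ (Submodule.span ℂ S).topologicalClosure) (hy : ∀ s ∈ S, ⟪y, s⟫ = 0) :
    ⟪y, x⟫ = 0 := by
  have h1 : Submodule.span ℂ S ≤ (ℂ ∙ y)ᗮ := by
    rw [Submodule.span_le]
    intro s hs
    exact Submodule.mem_orthogonal_singleton_iff_inner_right.mpr (hy s hs)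
  have h2 : (Submodule.span ℂ S).topologicalClosure ≤ (ℂ ∙ y)ᗮ :=
    Submodule.topologicalClosure_minimal _ h1 (ℂ ∙ y).isClosed_orthogonal
  exact Submodule.mem_orthogonal_singleton_iff_inner_right.mp (h2 hx)

omit [CompleteSpace H] in
lemma proj_fix {P : H →L[ℂ] H} (hP2 : P * P = P) {x : H}
    (hx : x ∈ LinearMap.range (P : H →ₗ[ℂ] H)) : P x = x := by
  obtain ⟨y, rfl⟩ := hx
  have := congrArg (fun T : H →L[ℂ] H => T y) hP2
  simpa using this

lemma proj_inner_sub (P : H →L[ℂ] H) (hsa : IsSelfAdjoint P) (hP2 : P * P = P)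
    (x : H) : ∀ w ∈ LinearMap.range (P : H →ₗ[ℂ] H), ⟪x - P x, w⟫ = 0 := by
  rintro w ⟨z, rfl⟩
  have hz : (P : H →ₗ[ℂ] H) z = P z := rfl
  have hPP : P (P x) = P x := by
    have := congrArg (fun T : H →L[ℂ] H => T x) hP2
    simpa using this
  rw [hz, ← ContinuousLinearMap.adjoint_inner_left P, hsa.adjoint_eq, map_sub, hPP, sub_self,
    inner_zero_left]

lemma proj_kill {P : H →L[ℂ] H} (hsa : IsSelfAdjoint P) (hP2 : P * P = P) {S : Set H}
    (hPr : LinearMap.range (P : H →ₗ[ℂ] H) = (Submodule.span ℂ S).topologicalClosure)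
    {y : H} (hy : ∀ s ∈ S, ⟪y, s⟫ = 0) : P y = 0 := by
  have hmem : P (P y) ∈ (Submodule.span ℂ S).topologicalClosure := by
    rw [← hPr]; exact ⟨P y, rfl⟩
  have h1 : ⟪y, P (P y)⟫ = 0 := orth_closure hmem hy
  have h2 : ⟪P y, P y⟫ = 0 := by
    rw [← ContinuousLinearMap.adjoint_inner_left P, hsa.adjoint_eq] at h1
    exact h1
  exact inner_self_eq_zero.mp h2

lemma proj_hasSum (v : J → H) (hv : Orthonormal ℂ v) (P : H →L[ℂ] H)
    (hsa : IsSelfAdjoint P) (hP2 : P * P = P)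
    (hPr : LinearMap.range (P : H →ₗ[ℂ] H) =
      (Submodule.span ℂ (Set.range v)).topologicalClosure) (x : H) :
    HasSum (fun j => ⟪v j, x⟫ • v j) (P x) := by
  set K := (Submodule.span ℂ (Set.range v)).topologicalClosure with hK
  have hKc : IsClosed (K : Set H) := Submodule.isClosed_topologicalClosure _
  haveI : CompleteSpace K := hKc.completeSpace_coe
  have hvK : ∀ j, v j ∈ K :=
    fun j => Submodule.le_topologicalClosure _ (Submodule.subset_span ⟨j, rfl⟩)
  set v' : J → K := fun j => ⟨v j, hvK j⟩ with hv'
  have hv'on : Orthonormal ℂ v' := by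
    constructor
    · intro j
      have := hv.1 j
      simpa [v', Submodule.norm_coe] using this
    · intro i j hij
      have := hv.2 hij
      simpa [v', Submodule.coe_inner] using this
  have hbot : (Submodule.span ℂ (Set.range v'))ᗮ = ⊥ := by
    rw [Submodule.eq_bot_iff]
    intro y hy
    have hy' : ∀ j, ⟪v j, (y : H)⟫ = 0 := by
      intro j
      have := hy (v' j) (Submodule.subset_span ⟨j, rfl⟩)
      simpa [Submodule.coe_inner] using this
    have hyv : ∀ s ∈ Set.range v, ⟪(y : H), s⟫ = 0 := by
      rintro s ⟨j, rfl⟩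
      rw [← inner_conj_symm, hy' j, map_zero]
    have : ⟪(y : H), (y : H)⟫ = 0 := orth_closure y.2 hyv
    exact Subtype.ext (inner_self_eq_zero.mp this)
  let b : HilbertBasis J ℂ K := HilbertBasis.mkOfOrthogonalEqBot hv'on hbot
  have hb : ⇑b = v' := HilbertBasis.coe_mkOfOrthogonalEqBot hv'on hbot
  have hs := HilbertBasis.hasSum_orthogonalProjection b x
  rw [hb] at hs
  have hs2 := (K.subtypeL.hasSum hs)
  simp only [map_smul, Submodule.coe_subtypeL', Submodule.coe_subtype] at hs2
  have hPx : P x = (K.orthogonalProjectionOnto x : H) := by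
    rw [Submodule.coe_orthogonalProjectionOnto_apply]
    symm
    apply Submodule.eq_starProjection_of_mem_of_inner_eq_zero
    · rw [← hPr]; exact ⟨x, rfl⟩
    · intro w hw
      rw [← hPr] at hw
      exact proj_inner_sub P hsa hP2 x w hw
  rw [hPx]
  exact hs2

omit [CompleteSpace H] in
lemma pythagoras_finset (t : Finset J) (c : J → H)
    (h : ∀ j ∈ t, ∀ k ∈ t, j ≠ k → ⟪c j, c k⟫ = 0) :
    ‖∑ j ∈ t, c j‖ ^ 2 = ∑ j ∈ t, ‖c j‖ ^ 2 := by
  have h1 : ⟪∑ j ∈ t, c j, ∑ j ∈ t, c j⟫ = ∑ j ∈ t, ⟪c j, c j⟫ := by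
    rw [sum_inner]
    refine Finset.sum_congr rfl fun j hj => ?_
    rw [inner_sum]
    rw [Finset.sum_eq_single_of_mem j hj]
    intro k hk hkj
    exact h j hj k hk (Ne.symm hkj)
  simp only [inner_self_eq_norm_sq_to_K] at h1
  apply Complex.ofReal_injective
  push_cast
  simpa using h1

lemma scalar_identity (α β a b : ℂ) (hrel : ‖α‖ ^ 2 + ‖β‖ ^ 2 = 1) :
    ‖a - (starRingEnd ℂ α * a + starRingEnd ℂ β * b) * α‖ ^ 2 +
      ‖(starRingEnd ℂ α * a + starRingEnd ℂ β * b) * β‖ ^ 2 =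
    ‖β‖ ^ 2 * (‖a‖ ^ 2 + ‖b‖ ^ 2) := by
  have key : ∀ z : ℂ, ((‖z‖ : ℂ)) ^ 2 = z * starRingEnd ℂ z := fun z => (RCLike.mul_conj z).symm
  have hrelC : α * starRingEnd ℂ α + β * starRingEnd ℂ β = 1 := by
    have := congrArg (fun r : ℝ => (r : ℂ)) hrel
    push_cast at this
    rw [key, key] at this
    simpa using this
  apply Complex.ofReal_injective
  push_cast
  simp only [key]
  simp only [map_sub, map_add, map_mul, RingHomCompTriple.comp_apply, RingHom.id_apply,
    Complex.conj_conj]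
  linear_combination ((starRingEnd ℂ α * a + starRingEnd ℂ β * b) *
    (α * starRingEnd ℂ a + β * starRingEnd ℂ b) - a * starRingEnd ℂ a) * hrelC

end Helpers

/-- An orthogonal projection: a bounded idempotent self-adjoint operator. -/
def IsOrthogonalProjection {H : Type*} [NormedAddCommGroup H] [InnerProductSpace ℂ H]
    [CompleteSpace H] (E : H →L[ℂ] H) : Prop :=
  IsSelfAdjoint E ∧ E * E = E

/-- Let `{e_j}` and `{e_j^⊥}` be mutually orthogonal orthonormal systems in a
complex Hilbert space, indexed by a countable set `J`, let `α_j, β_j ∈ ℂ` with `α_j β_j ≠ 0`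
and `|α_j|² + |β_j|² = 1`, and put `f_j := α_j e_j + β_j e_j^⊥`.  If `E` and `F` are the
orthogonal projections onto the closed spans of `{e_j}` and `{f_j}` respectively, then:
(i) `{f_j}` is an orthonormal system; (ii) `E ∧ F = 0`; (iii) each `e_j` is an eigenvector of
`EFE` with eigenvalue `|α_j|²`; and (iv) `‖E − F‖ = sup_j √(1 − |α_j|²)`. -/
theorem statement15 {H : Type*} [NormedAddCommGroup H] [InnerProductSpace ℂ H] [CompleteSpace H]
    {J : Type*} [Countable J] (e ebot : J → H)
    (he : Orthonormal ℂ e) (hebot : Orthonormal ℂ ebot)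
    (hcross : ∀ j k, (inner ℂ (e j) (ebot k) : ℂ) = 0)
    (α β : J → ℂ) (hαβ : ∀ j, α j * β j ≠ 0) (hnorm : ∀ j, ‖α j‖ ^ 2 + ‖β j‖ ^ 2 = 1)
    (f : J → H) (hf : ∀ j, f j = α j • e j + β j • ebot j)
    (E F : H →L[ℂ] H) (hE : IsOrthogonalProjection E) (hF : IsOrthogonalProjection F)
    (hEr : LinearMap.range (E : H →ₗ[ℂ] H) =
      (Submodule.span ℂ (Set.range e)).topologicalClosure)
    (hFr : LinearMap.range (F : H →ₗ[ℂ] H) =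
      (Submodule.span ℂ (Set.range f)).topologicalClosure) :
    Orthonormal ℂ f ∧
      (LinearMap.range (E : H →ₗ[ℂ] H) ⊓ LinearMap.range (F : H →ₗ[ℂ] H) = ⊥) ∧
      (∀ j, (E * F * E) (e j) = ((‖α j‖ ^ 2 : ℝ) : ℂ) • e j) ∧
      ‖E - F‖ = ⨆ j, Real.sqrt (1 - ‖α j‖ ^ 2) := by
  classical
  obtain ⟨hEsa, hE2⟩ := hE
  obtain ⟨hFsa, hF2⟩ := hF
  have hbe : ∀ j k, ⟪ebot j, e k⟫ = 0 := fun j k => by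
    rw [← inner_conj_symm, hcross k j, map_zero]
  have hee := orthonormal_iff_ite.mp he
  have hbb := orthonormal_iff_ite.mp hebot
  have hnormC : ∀ j, starRingEnd ℂ (α j) * α j + starRingEnd ℂ (β j) * β j = 1 := by
    intro j
    have key : ∀ z : ℂ, ((‖z‖ : ℂ)) ^ 2 = z * starRingEnd ℂ z := fun z => (RCLike.mul_conj z).symm
    have h := congrArg (fun r : ℝ => (r : ℂ)) (hnorm j)
    push_cast at h
    rw [key, key] at h
    linear_combination h
  -- (i)
  have hfon : Orthonormal ℂ f := by
    rw [orthonormal_iff_ite]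
    intro j k
    rw [hf, hf]
    simp only [inner_add_left, inner_add_right, inner_smul_left, inner_smul_right, hcross, hbe,
      hee, hbb, mul_zero, zero_add, add_zero]
    split_ifs with h
    · subst h
      rw [mul_one, mul_one]
      linear_combination hnormC j
    · ring
  have hff := orthonormal_iff_ite.mp hfon
  -- basic projection facts
  have heK : ∀ j, e j ∈ LinearMap.range (E : H →ₗ[ℂ] H) := fun j =>
    hEr ▸ Submodule.le_topologicalClosure _ (Submodule.subset_span ⟨j, rfl⟩)
  have hfK : ∀ j, f j ∈ LinearMap.range (F : H →ₗ[ℂ] H) := fun j =>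
    hFr ▸ Submodule.le_topologicalClosure _ (Submodule.subset_span ⟨j, rfl⟩)
  have hEe : ∀ j, E (e j) = e j := fun j => proj_fix hE2 (heK j)
  have hFf : ∀ j, F (f j) = f j := fun j => proj_fix hF2 (hfK j)
  have hEebot : ∀ j, E (ebot j) = 0 := by
    intro j
    refine proj_kill hEsa hE2 hEr ?_
    rintro s ⟨k, rfl⟩
    exact hbe j k
  -- the auxiliary vectors g j, orthogonal to all f k
  set g : J → H := fun j => starRingEnd ℂ (β j) • e j - starRingEnd ℂ (α j) • ebot j with hg
  have hgf : ∀ j k, ⟪g j, f k⟫ = 0 := by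
    intro j k
    rw [hg, hf]
    simp only [inner_sub_left, inner_add_right, inner_smul_left, inner_smul_right, hcross, hbe,
      hee, hbb, Complex.conj_conj, mul_zero, zero_add, add_zero]
    split_ifs with h
    · rw [h]; ring
    · ring
  have hFg : ∀ j, F (g j) = 0 := by
    intro j
    refine proj_kill hFsa hF2 hFr ?_
    rintro s ⟨k, rfl⟩
    exact hgf j k
  have hdecomp : ∀ j, e j = starRingEnd ℂ (α j) • f j + β j • g j := by
    intro j
    rw [hf, hg]
    match_scalars
    · linear_combination (-1 : ℂ) * hnormC j
    · ring
  have hFe : ∀ j, F (e j) = starRingEnd ℂ (α j) • f j := by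
    intro j
    conv_lhs => rw [hdecomp j]
    rw [map_add, map_smul, map_smul, hFf, hFg, smul_zero, add_zero]
  refine ⟨hfon, ?_, ?_, ?_⟩
  -- (ii)
  · rw [Submodule.eq_bot_iff]
    intro x hx
    rw [Submodule.mem_inf] at hx
    obtain ⟨hxE, hxF⟩ := hx
    rw [hEr] at hxE
    rw [hFr] at hxF
    have hb0 : ∀ j, ⟪ebot j, x⟫ = 0 := by
      intro j
      refine orth_closure hxE ?_
      rintro s ⟨k, rfl⟩
      exact hbe j k
    have hg0 : ∀ j, ⟪g j, x⟫ = 0 := by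
      intro j
      refine orth_closure hxF ?_
      rintro s ⟨k, rfl⟩
      exact hgf j k
    have ha0 : ∀ j, ⟪e j, x⟫ = 0 := by
      intro j
      have h1 := hg0 j
      rw [hg, inner_sub_left, inner_smul_left, inner_smul_left, Complex.conj_conj,
        Complex.conj_conj, hb0 j, mul_zero, sub_zero] at h1
      have hβ : β j ≠ 0 := fun h => hαβ j (by rw [h, mul_zero])
      exact (mul_eq_zero.mp h1).resolve_left hβ
    have hf0 : ∀ k, ⟪x, f k⟫ = 0 := by
      intro k
      rw [← inner_conj_symm, hf, inner_add_left, inner_smul_left, inner_smul_left, ha0 k, hb0 k,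
        mul_zero, mul_zero, add_zero, map_zero]
    have : ⟪x, x⟫ = 0 := by
      refine orth_closure hxF ?_
      rintro s ⟨k, rfl⟩
      exact hf0 k
    exact inner_self_eq_zero.mp this
  -- (iii)
  · intro j
    have : (E * F * E) (e j) = E (F (E (e j))) := rfl
    rw [this, hEe j, hFe j, map_smul, hf, map_add, map_smul, map_smul, hEe j, hEebot j,
      smul_zero, add_zero, smul_smul]
    congr 1
    rw [RCLike.conj_mul]
    norm_cast
  -- (iv)
  · rcases isEmpty_or_nonempty J with hJ | hJ
    · -- empty index set: both projections are zero
      have hbotcl : (Submodule.span ℂ (∅ : Set H)).topologicalClosure = ⊥ := by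
        rw [Submodule.span_empty]
        exact IsClosed.submodule_topologicalClosure_eq (by
          simp only [Submodule.bot_coe]
          exact isClosed_singleton)
      have hE0 : E = 0 := by
        ext x
        have hx : E x ∈ LinearMap.range (E : H →ₗ[ℂ] H) := ⟨x, rfl⟩
        rw [hEr, Set.range_eq_empty e, hbotcl] at hx
        simpa using hx
      have hF0 : F = 0 := by
        ext x
        have hx : F x ∈ LinearMap.range (F : H →ₗ[ℂ] H) := ⟨x, rfl⟩
        rw [hFr, Set.range_eq_empty f, hbotcl] at hx
        simpa using hx
      rw [hE0, hF0, sub_zero, norm_zero, Real.iSup_of_isEmpty]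
    · -- nonempty index set
      have hα1 : ∀ j, 0 ≤ 1 - ‖α j‖ ^ 2 := by
        intro j
        have := hnorm j
        nlinarith [sq_nonneg ‖β j‖]
      have hbdd : BddAbove (Set.range fun j => Real.sqrt (1 - ‖α j‖ ^ 2)) := by
        refine ⟨1, ?_⟩
        rintro y ⟨j, rfl⟩
        rw [Real.sqrt_le_one]
        nlinarith [sq_nonneg ‖α j‖]
      set s := ⨆ j, Real.sqrt (1 - ‖α j‖ ^ 2) with hs
      have hles : ∀ j, Real.sqrt (1 - ‖α j‖ ^ 2) ≤ s := fun j => le_ciSup hbdd j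
      have hs0 : 0 ≤ s := le_trans (Real.sqrt_nonneg _) (hles (Classical.arbitrary J))
      have hEFe : ∀ j, (E - F) (e j) = e j - starRingEnd ℂ (α j) • f j := by
        intro j
        rw [ContinuousLinearMap.sub_apply, hEe j, hFe j]
      have hnormEF : ∀ j, ‖(E - F) (e j)‖ = Real.sqrt (1 - ‖α j‖ ^ 2) := by
        intro j
        have hip : ⟪e j, starRingEnd ℂ (α j) • f j⟫ = ((‖α j‖ ^ 2 : ℝ) : ℂ) := by
          rw [inner_smul_right, hf, inner_add_right, inner_smul_right, inner_smul_right,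
            hee j j, hcross j j, if_pos rfl, mul_one, mul_zero, add_zero, RCLike.conj_mul]
          norm_cast
        have hsq : ‖(E - F) (e j)‖ ^ 2 = 1 - ‖α j‖ ^ 2 := by
          rw [hEFe j, norm_sub_sq (𝕜 := ℂ), hip, norm_smul, RCLike.norm_conj,
            hfon.1 j, he.1 j]
          simp only [RCLike.re_to_complex, Complex.ofReal_re]
          ring
        rw [← Real.sqrt_sq (norm_nonneg ((E - F) (e j))), hsq]
      have hlow : s ≤ ‖E - F‖ := by
        refine ciSup_le fun j => ?_
        rw [← hnormEF j]
        calc ‖(E - F) (e j)‖ ≤ ‖E - F‖ * ‖e j‖ := (E - F).le_opNorm (e j)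
          _ = ‖E - F‖ := by rw [he.1 j, mul_one]
      have hup : ‖E - F‖ ≤ s := by
        refine ContinuousLinearMap.opNorm_le_bound _ hs0 fun x => ?_
        set a : J → ℂ := fun j => ⟪e j, x⟫ with ha
        set b : J → ℂ := fun j => ⟪ebot j, x⟫ with hb
        have hfx : ∀ j, ⟪f j, x⟫ = starRingEnd ℂ (α j) * a j + starRingEnd ℂ (β j) * b j := by
          intro j
          rw [hf, inner_add_left, inner_smul_left, inner_smul_left]
        set c : J → H := fun j => a j • e j - ⟪f j, x⟫ • f j with hc
        have hEsum := proj_hasSum e he E hEsa hE2 hEr x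
        have hFsum := proj_hasSum f hfon F hFsa hF2 hFr x
        have hsum : HasSum c ((E - F) x) := by
          have := hEsum.sub hFsum
          simpa [hc, ContinuousLinearMap.sub_apply] using this
        have hcoord : ∀ j, c j = (a j - ⟪f j, x⟫ * α j) • e j +
            (-(⟪f j, x⟫ * β j)) • ebot j := by
          intro j
          rw [hc]
          simp only [hf]
          module
        have hcnorm : ∀ j, ‖c j‖ ^ 2 = ‖β j‖ ^ 2 * (‖a j‖ ^ 2 + ‖b j‖ ^ 2) := by
          intro j
          rw [hcoord j]
          have hperp : ⟪(a j - ⟪f j, x⟫ * α j) • e j, (-(⟪f j, x⟫ * β j)) • ebot j⟫ = 0 := by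
            rw [inner_smul_left, inner_smul_right, hcross j j, mul_zero, mul_zero]
          have hpyth := norm_add_sq_eq_norm_sq_add_norm_sq_of_inner_eq_zero _ _ hperp
          rw [pow_two, hpyth, ← pow_two, ← pow_two, norm_smul, norm_smul,
            he.1 j, hebot.1 j, mul_one, mul_one, norm_neg, hfx j]
          exact scalar_identity (α j) (β j) (a j) (b j) (hnorm j)
        have hcperp : ∀ j k, j ≠ k → ⟪c j, c k⟫ = 0 := by
          intro j k hjk
          rw [hcoord j, hcoord k]
          simp only [inner_add_left, inner_add_right, inner_smul_left, inner_smul_right,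
            hee, hbb, hcross, hbe, if_neg hjk, mul_zero, zero_add, add_zero]
        have hcomb : Orthonormal ℂ (Sum.elim e ebot) := by
          constructor
          · rintro (j | j)
            exacts [he.1 j, hebot.1 j]
          · rintro (j | j) (k | k) hjk <;> simp only [Sum.elim_inl, Sum.elim_inr]
            · exact he.2 (by simpa using hjk)
            · exact hcross j k
            · exact hbe j k
            · exact hebot.2 (by simpa using hjk)
        have hfin : ∀ t : Finset J, ‖∑ j ∈ t, c j‖ ≤ s * ‖x‖ := by
          intro t
          have h1 : ‖∑ j ∈ t, c j‖ ^ 2 = ∑ j ∈ t, ‖c j‖ ^ 2 :=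
            pythagoras_finset t c fun j _ k _ h => hcperp j k h
          have hbessel : ∑ j ∈ t, (‖a j‖ ^ 2 + ‖b j‖ ^ 2) ≤ ‖x‖ ^ 2 := by
            have h2 := hcomb.sum_inner_products_le (s := t.disjSum t) x
            rw [Finset.sum_disjSum] at h2
            simp only [Sum.elim_inl, Sum.elim_inr] at h2
            rw [Finset.sum_add_distrib]
            exact h2
          have hβs : ∀ j, ‖β j‖ ^ 2 ≤ s ^ 2 := by
            intro j
            have h3 : ‖β j‖ ^ 2 = 1 - ‖α j‖ ^ 2 := by nlinarith [hnorm j]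
            rw [h3, ← Real.sq_sqrt (hα1 j)]
            exact pow_le_pow_left₀ (Real.sqrt_nonneg _) (hles j) 2
          have h2 : ‖∑ j ∈ t, c j‖ ^ 2 ≤ (s * ‖x‖) ^ 2 := by
            rw [h1]
            calc ∑ j ∈ t, ‖c j‖ ^ 2 = ∑ j ∈ t, ‖β j‖ ^ 2 * (‖a j‖ ^ 2 + ‖b j‖ ^ 2) :=
                Finset.sum_congr rfl fun j _ => hcnorm j
              _ ≤ ∑ j ∈ t, s ^ 2 * (‖a j‖ ^ 2 + ‖b j‖ ^ 2) := by
                refine Finset.sum_le_sum fun j _ => ?_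
                exact mul_le_mul_of_nonneg_right (hβs j) (by positivity)
              _ = s ^ 2 * ∑ j ∈ t, (‖a j‖ ^ 2 + ‖b j‖ ^ 2) := by rw [Finset.mul_sum]
              _ ≤ s ^ 2 * ‖x‖ ^ 2 := mul_le_mul_of_nonneg_left hbessel (sq_nonneg s)
              _ = (s * ‖x‖) ^ 2 := by ring
          nlinarith [norm_nonneg (∑ j ∈ t, c j), mul_nonneg hs0 (norm_nonneg x)]
        have htend : Filter.Tendsto (fun t : Finset J => ‖∑ j ∈ t, c j‖) Filter.atTop
            (nhds ‖(E - F) x‖) := hsum.norm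
        exact le_of_tendsto htend (Filter.Eventually.of_forall hfin)
      exact le_antisymm hup hlow
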